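/- Completeness of partial-space search: if π = a₁,…,aₘ is a valid plan for a planning task Π, then there exists a sequence of partial-space search nodes starting at the root ⟨s₀,⊥⟩, in which each node is a successor of the previous one, ending at a node ⟨s,⊥⟩ with G ⊆ s, and such that the fully instantiated partial actions appearing along the sequence, taken in order, are exactly a₁,…,aₘ. -/

import Mathlib

namespace PS

/-- A lifted planning task: atoms, action schemas with arities, objects,
preconditions/add/delete effects of ground instantiations, initial state and goal. -/
structure LiftedTask where
  Atom : Type
  Schema : Type
  Obj : Type
  arity : Schema → ℕ
  pre : Schema → List Obj → Set Atom
  add : Schema → List Obj → Set Atom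
  del : Schema → List Obj → Set Atom
  init : Set Atom
  goal : Set Atom

/-- A ground action: a schema with a full list of instantiating objects. -/
abbrev GroundAction (T : LiftedTask) :=
  { p : T.Schema × List T.Obj // p.2.length = T.arity p.1 }

/-- A partial action: `none` is ⊥; otherwise a schema with a prefix of instantiating objects. -/
abbrev PartialAction (T : LiftedTask) :=
  Option { p : T.Schema × List T.Obj // p.2.length ≤ T.arity p.1 }

/-- `a` is applicable in state `s` iff `pre(a) ⊆ s`. -/
def Applicable (T : LiftedTask) (a : GroundAction T) (s : Set T.Atom) : Prop :=
  T.pre a.val.1 a.val.2 ⊆ s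

/-- `succ(s,a) = (s \ del(a)) ∪ add(a)`. -/
def applySucc (T : LiftedTask) (s : Set T.Atom) (a : GroundAction T) : Set T.Atom :=
  (s \ T.del a.val.1 a.val.2) ∪ T.add a.val.1 a.val.2

/-- A ground action viewed as a (fully instantiated) partial action. -/
def toPartial (T : LiftedTask) (a : GroundAction T) : PartialAction T :=
  some ⟨a.val, le_of_eq a.prop⟩

/-- A partial action is fully instantiated iff all schema parameters are instantiated. -/
def isFull (T : LiftedTask) : PartialAction T → Prop
  | none => False
  | some p => p.val.2.length = T.arity p.val.1

/-- `𝒜^ρ`: the set of ground actions in the subtree rooted at `ρ` of the partial action tree. -/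
def subtree (T : LiftedTask) : PartialAction T → Set (GroundAction T)
  | none => Set.univ
  | some p => {a : GroundAction T | a.val.1 = p.val.1 ∧ p.val.2 <+: a.val.2}

/-- `ρ` is applicable in `s` iff `𝒜^ρ_s = 𝒜^ρ ∩ 𝒜_s ≠ ∅`. -/
def ApplicableP (T : LiftedTask) (ρ : PartialAction T) (s : Set T.Atom) : Prop :=
  ∃ a ∈ subtree T ρ, Applicable T a s

/-- The child relation of the partial action tree. -/
def Child (T : LiftedTask) : PartialAction T → PartialAction T → Prop
  | none, some p' => p'.val.2 = []
  | some p, some p' => p.val.1 = p'.val.1 ∧ ∃ o : T.Obj, p'.val.2 = p.val.2 ++ [o]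
  | _, none => False

/-- A partial-space search node: a state and a partial action. -/
abbrev Node (T : LiftedTask) := Set T.Atom × PartialAction T

/-- The successor relation of partial-space search. -/
inductive Succ (T : LiftedTask) : Node T → Node T → Prop
  | refine {s : Set T.Atom} {ρ ρ' : PartialAction T} :
      Child T ρ ρ' → ApplicableP T ρ' s → Succ T (s, ρ) (s, ρ')
  | finish {s : Set T.Atom} (a : GroundAction T) :
      Succ T (s, toPartial T a) (applySucc T s a, (none : PartialAction T))

/-- `IsPlanFrom T s π`: `π` is a valid plan starting from state `s`. -/
inductive IsPlanFrom (T : LiftedTask) : Set T.Atom → List (GroundAction T) → Prop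
  | nil {s : Set T.Atom} : T.goal ⊆ s → IsPlanFrom T s []
  | cons {s : Set T.Atom} {a : GroundAction T} {l : List (GroundAction T)} :
      Applicable T a s → IsPlanFrom T (applySucc T s a) l → IsPlanFrom T s (a :: l)

/-- The ground action corresponding to a fully instantiated partial action, if any. -/
def groundOf? (T : LiftedTask) : PartialAction T → Option (GroundAction T)
  | none => none
  | some p => if h : p.val.2.length = T.arity p.val.1 then some ⟨p.val, h⟩ else none

/-- The ordered subsequence of fully instantiated partial actions in a node sequence. -/
def extractPlan (T : LiftedTask) (l : List (Node T)) : List (GroundAction T) :=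
  l.filterMap fun n => groundOf? T n.2

/-- The partial action instantiating the first `j` parameters of the ground action `a`. -/
def prefixPA (T : LiftedTask) (a : GroundAction T) (j : ℕ) : PartialAction T :=
  some ⟨(a.val.1, a.val.2.take j), by
    rw [List.length_take]
    exact (min_le_right _ _).trans a.prop.le⟩

/-- The parent map of the partial action tree (sends ⊥ to ⊥). -/
def parentPA (T : LiftedTask) : PartialAction T → PartialAction T
  | none => none
  | some p =>
      if p.val.2.isEmpty then none
      else some ⟨(p.val.1, p.val.2.dropLast), by
        rw [List.length_dropLast]
        exact (Nat.sub_le _ _).trans p.prop⟩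

/-- Specificity: `0` for ⊥, `j+1` for a partial action with `j` instantiated parameters. -/
def spec (T : LiftedTask) : PartialAction T → ℕ
  | none => 0
  | some p => p.val.2.length + 1

/-- The canonical root-to-goal path obtained by decomposing each plan action into its
chain of partial actions of increasing specificity. -/
def planPath (T : LiftedTask) : Set T.Atom → List (GroundAction T) → List (Node T)
  | s, [] => [(s, (none : PartialAction T))]
  | s, a :: π =>
      ((s, (none : PartialAction T)) ::
        (List.range (T.arity a.val.1 + 1)).map fun j => (s, prefixPA T a j)) ++
        planPath T (applySucc T s a) π

/-- `ρ` lies on the unique chain from ⊥ to the ground action `a` in the partial action tree. -/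
def OnChain (T : LiftedTask) (ρ : PartialAction T) (a : GroundAction T) : Prop :=
  ρ = none ∨ ∃ j ≤ T.arity a.val.1, ρ = prefixPA T a j


lemma prefixPA_full (T : LiftedTask) (a : GroundAction T) :
    prefixPA T a (T.arity a.val.1) = toPartial T a := by
  simp only [prefixPA, toPartial, Option.some.injEq]
  exact Subtype.ext (by simp [List.take_of_length_le a.prop.le])

lemma child_none (T : LiftedTask) (a : GroundAction T) :
    Child T none (prefixPA T a 0) := by
  show a.val.2.take 0 = []
  simp

lemma child_succ (T : LiftedTask) (a : GroundAction T) {j : ℕ} (hj : j < T.arity a.val.1) :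
    Child T (prefixPA T a j) (prefixPA T a (j + 1)) := by
  have hj' : j < a.val.2.length := a.prop ▸ hj
  refine ⟨rfl, a.val.2[j], ?_⟩
  show a.val.2.take (j + 1) = a.val.2.take j ++ [a.val.2[j]]
  exact (List.take_concat_get' _ _ hj').symm

lemma mem_subtree_prefixPA (T : LiftedTask) (a : GroundAction T) (j : ℕ) :
    a ∈ subtree T (prefixPA T a j) :=
  ⟨rfl, List.take_prefix j _⟩

lemma applicableP_prefixPA (T : LiftedTask) {a : GroundAction T} {s : Set T.Atom}
    (h : Applicable T a s) (j : ℕ) : ApplicableP T (prefixPA T a j) s :=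
  ⟨a, mem_subtree_prefixPA T a j, h⟩

lemma groundOf?_prefixPA_lt (T : LiftedTask) (a : GroundAction T) {j : ℕ}
    (hj : j < T.arity a.val.1) : groundOf? T (prefixPA T a j) = none := by
  have : (a.val.2.take j).length = j := by
    rw [List.length_take]; exact min_eq_left (a.prop ▸ hj.le)
  simp only [groundOf?, prefixPA]
  rw [dif_neg]
  simp only [this]
  omega

lemma groundOf?_prefixPA_full (T : LiftedTask) (a : GroundAction T) :
    groundOf? T (prefixPA T a (T.arity a.val.1)) = some a := by
  rw [prefixPA_full]
  simp only [groundOf?, toPartial]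
  rw [dif_pos a.prop]

lemma planPath_ne (T : LiftedTask) (s : Set T.Atom) (π : List (GroundAction T)) :
    planPath T s π ≠ [] := by
  cases π <;> simp [planPath]

lemma planPath_head? (T : LiftedTask) (s : Set T.Atom) (π : List (GroundAction T)) :
    (planPath T s π).head? = some (s, (none : PartialAction T)) := by
  cases π <;> simp [planPath]

lemma planPath_spec (T : LiftedTask) (s : Set T.Atom) (π : List (GroundAction T))
    (h : IsPlanFrom T s π) :
    List.Chain' (Succ T) (planPath T s π) ∧
    ((planPath T s π).getLast (planPath_ne T s π)).2 = (none : PartialAction T) ∧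
    T.goal ⊆ ((planPath T s π).getLast (planPath_ne T s π)).1 ∧
    extractPlan T (planPath T s π) = π := by
  induction h with
  | nil hg => simp [planPath, extractPlan, groundOf?, hg, List.Chain']
  | @cons s a l happ hrest ih =>
    have hne := planPath_ne T (applySucc T s a) l
    have hpp : planPath T s (a :: l) =
        ((s, (none : PartialAction T)) ::
          (List.range (T.arity a.val.1 + 1)).map fun j => (s, prefixPA T a j)) ++
          planPath T (applySucc T s a) l := rfl
    have hchainseg : List.Chain' (Succ T)
        ((s, (none : PartialAction T)) ::
          (List.range (T.arity a.val.1 + 1)).map fun j => (s, prefixPA T a j)) := by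
      rw [List.Chain', List.isChain_cons]
      constructor
      · intro y hy
        rw [List.head?_map, List.range_succ_eq_map] at hy
        simp only [List.head?_cons, Option.map_some, Option.mem_def,
          Option.some.injEq] at hy
        subst hy
        exact Succ.refine (child_none T a) (applicableP_prefixPA T happ 0)
      · rw [List.isChain_map, List.isChain_range_succ]
        intro m hm
        exact Succ.refine (child_succ T a hm) (applicableP_prefixPA T happ (m + 1))
    have hlastseg : ((s, (none : PartialAction T)) ::
          (List.range (T.arity a.val.1 + 1)).map fun j => (s, prefixPA T a j)).getLast? =
        some (s, toPartial T a) := by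
      rw [List.range_succ, List.map_append, ← List.cons_append]
      simp only [List.map_cons, List.map_nil, List.getLast?_concat, prefixPA_full]
    have h1 : (((s, (none : PartialAction T)) ::
        (List.range (T.arity a.val.1 + 1)).map fun j => (s, prefixPA T a j)).filterMap
          fun nd => groundOf? T nd.2) = [a] := by
      rw [List.filterMap_cons_none (by simp [groundOf?])]
      rw [List.filterMap_map, List.range_succ, List.filterMap_append]
      rw [List.filterMap_eq_nil_iff.mpr, List.nil_append]
      · simp only [List.filterMap_cons, List.filterMap_nil, Function.comp_apply,
          groundOf?_prefixPA_full]
      · intro x hx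
        simp only [List.mem_range] at hx
        simp [Function.comp, groundOf?_prefixPA_lt T a hx]
    refine ⟨?_, ?_, ?_, ?_⟩
    · rw [hpp, List.Chain', List.isChain_append]
      refine ⟨hchainseg, ih.1, ?_⟩
      intro x hx y hy
      rw [hlastseg, Option.mem_def, Option.some.injEq] at hx
      rw [planPath_head?, Option.mem_def, Option.some.injEq] at hy
      subst hx; subst hy
      exact Succ.finish a
    · rw [List.getLast_congr _ (by simp) hpp, List.getLast_append_right hne]
      exact ih.2.1
    · rw [List.getLast_congr _ (by simp) hpp, List.getLast_append_right hne]
      exact ih.2.2.1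
    · show List.filterMap _ (planPath T s (a :: l)) = _
      rw [hpp, List.filterMap_append, h1, List.singleton_append]
      exact congrArg (List.cons a) ih.2.2.2

/-- **Completeness of partial-space search** (Theorem 1, completeness part). -/
theorem partial_space_search_complete (T : LiftedTask) (π : List (GroundAction T))
    (hπ : IsPlanFrom T T.init π) :
    ∃ (ns : List (Node T)) (hne : ns ≠ []),
      List.Chain' (Succ T) ns ∧
      ns.head hne = (T.init, (none : PartialAction T)) ∧
      (ns.getLast hne).2 = (none : PartialAction T) ∧
      T.goal ⊆ (ns.getLast hne).1 ∧
      extractPlan T ns = π := by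
  refine ⟨planPath T T.init π, planPath_ne T T.init π, ?_, ?_, ?_, ?_, ?_⟩
  · exact (planPath_spec T T.init π hπ).1
  · have := planPath_head? T T.init π
    rwa [List.head?_eq_head (planPath_ne T T.init π), Option.some.injEq] at this
  · exact (planPath_spec T T.init π hπ).2.1
  · exact (planPath_spec T T.init π hπ).2.2.1
  · exact (planPath_spec T T.init π hπ).2.2.2


end PS
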